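/- Let C = (C₀,…,C_{k−1}) be an equitable k-partition of the halved n-cube with quotient matrix S. Define C^{(t)} on the halved tn-cube by C^{(t)}(x̄₁,…,x̄_t) = C(x̄₁ + ⋯ + x̄_t) (where x̄ᵢ are length-n blocks and the total weight of the tn-word is even, hence the sum has even weight). Then C^{(t)} is an equitable k-partition of the halved tn-cube with quotient matrix S^{(t)} = t²S + n·(t(t−1)/2)·Id. -/

import Mathlib

open Finset

/-- The hypercube graph on binary words indexed by `ι`. -/
def cube (ι : Type*) [Fintype ι] [DecidableEq ι] : SimpleGraph (ι → ZMod 2) where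
  Adj x y := hammingDist x y = 1
  symm := ⟨fun x y h => by show hammingDist y x = 1; rw [hammingDist_comm]; exact h⟩
  loopless := ⟨fun x h => by simp [hammingDist_self] at h⟩

instance (ι : Type*) [Fintype ι] [DecidableEq ι] : DecidableRel (cube ι).Adj :=
  fun x y => inferInstanceAs (Decidable (hammingDist x y = 1))

/-- The halved hypercube: even-weight words, adjacent iff Hamming distance 2. -/
def halvedCube (ι : Type*) [Fintype ι] [DecidableEq ι] :
    SimpleGraph {x : ι → ZMod 2 // Even (hammingDist x 0)} where
  Adj x y := hammingDist x.1 y.1 = 2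
  symm := ⟨fun x y h => by show hammingDist y.1 x.1 = 2; rw [hammingDist_comm]; exact h⟩
  loopless := ⟨fun x h => by simp [hammingDist_self] at h⟩

instance (ι : Type*) [Fintype ι] [DecidableEq ι] : DecidableRel (halvedCube ι).Adj :=
  fun x y => inferInstanceAs (Decidable (hammingDist x.1 y.1 = 2))

variable {V : Type*} [Fintype V] [DecidableEq V]

/-- Number of neighbors of `v` in the set `C`. -/
def nbrCount (G : SimpleGraph V) [DecidableRel G.Adj] (v : V) (C : Finset V) : ℕ :=
  (C.filter (G.Adj v)).card

/-- `(C0, C1)` is an equitable 2-partition with quotient matrix `[[a,b],[c,d]]`. -/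
def IsEquitable2 (G : SimpleGraph V) [DecidableRel G.Adj] (C0 C1 : Finset V)
    (a b c d : ℕ) : Prop :=
  Disjoint C0 C1 ∧ C0 ∪ C1 = Finset.univ ∧
  (∀ v ∈ C0, nbrCount G v C0 = a ∧ nbrCount G v C1 = b) ∧
  (∀ v ∈ C1, nbrCount G v C0 = c ∧ nbrCount G v C1 = d)

/-- `C` is an equitable `k`-partition with quotient matrix `S`. -/
def IsEquitableK (G : SimpleGraph V) [DecidableRel G.Adj] {k : ℕ}
    (C : V → Fin k) (S : Fin k → Fin k → ℕ) : Prop :=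
  ∀ (v : V) (j : Fin k),
    (Finset.univ.filter (fun w => G.Adj v w ∧ C w = j)).card = S (C v) j

set_option linter.unusedSectionVars false
set_option maxHeartbeats 1000000
section helpers
variable {ι : Type*} [Fintype ι] [DecidableEq ι]

lemma even_dist_iff (x : ι → ZMod 2) : Even (hammingDist x 0) ↔ ∑ i, x i = 0 := by
  classical
  have h1 : hammingDist x 0 = (univ.filter (fun i => x i ≠ 0)).card := rfl
  have h2 : ∑ i, x i = ((univ.filter (fun i => x i ≠ 0)).card : ZMod 2) := by
    rw [← Finset.sum_filter_ne_zero]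
    rw [Finset.card_eq_sum_ones, Nat.cast_sum]
    refine Finset.sum_congr rfl fun i hi => ?_
    have := (Finset.mem_filter.mp hi).2
    revert this
    generalize x i = a
    revert a; decide
  rw [h1, h2, ZMod.natCast_eq_zero_iff, even_iff_two_dvd]

/-- flip two coordinates -/
def flipf (x : ι → ZMod 2) (p q : ι) : ι → ZMod 2 :=
  fun r => x r + (if r = p then 1 else 0) + (if r = q then 1 else 0)

lemma flipf_even (x : ι → ZMod 2) (hx : Even (hammingDist x 0)) (p q : ι) :
    Even (hammingDist (flipf x p q) 0) := by
  rw [even_dist_iff] at hx ⊢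
  simp only [flipf, Finset.sum_add_distrib, hx, Finset.sum_ite_eq', Finset.mem_univ, if_true]
  decide

abbrev Vtx (ι : Type*) [Fintype ι] [DecidableEq ι] := {x : ι → ZMod 2 // Even (hammingDist x 0)}

def flipV (v : Vtx ι) (p q : ι) : Vtx ι := ⟨flipf v.1 p q, flipf_even v.1 v.2 p q⟩

lemma flipV_self (v : Vtx ι) (p : ι) : flipV v p p = v := by
  apply Subtype.ext
  funext r
  simp only [flipV, flipf]
  have h11 : (1:ZMod 2) + 1 = 0 := by decide
  by_cases h : r = p <;> simp [h, add_assoc, h11]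

lemma zmod2_add_one_ne (a : ZMod 2) : a + 1 ≠ a := by revert a; decide

lemma flipf_ne_iff (x : ι → ZMod 2) {p q : ι} (hpq : p ≠ q) (r : ι) :
    flipf x p q r ≠ x r ↔ r = p ∨ r = q := by
  simp only [flipf]
  by_cases h1 : r = p <;> by_cases h2 : r = q <;>
    simp [h1, h2, hpq, Ne.symm hpq, zmod2_add_one_ne]

lemma flipf_dist (x : ι → ZMod 2) {p q : ι} (hpq : p ≠ q) :
    hammingDist (flipf x p q) x = 2 := by
  have : (univ.filter fun r => flipf x p q r ≠ x r) = {p, q} := by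
    ext r
    simp [flipf_ne_iff x hpq r]
  show (univ.filter fun r => flipf x p q r ≠ x r).card = 2
  rw [this, Finset.card_insert_of_notMem (by simp [hpq]), Finset.card_singleton]

lemma flipf_eq_iff {x : ι → ZMod 2} {p q a b : ι} (hpq : p ≠ q) (hab : a ≠ b)
    (h : flipf x a b = flipf x p q) : (a = p ∧ b = q) ∨ (a = q ∧ b = p) := by
  have key : ∀ r, r = a ∨ r = b ↔ r = p ∨ r = q := by
    intro r
    constructor
    · intro hr
      have : flipf x a b r ≠ x r := (flipf_ne_iff x hab r).mpr hr
      rw [h] at this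
      exact (flipf_ne_iff x hpq r).mp this
    · intro hr
      have : flipf x p q r ≠ x r := (flipf_ne_iff x hpq r).mpr hr
      rw [← h] at this
      exact (flipf_ne_iff x hab r).mp this
  have ha := (key a).mp (Or.inl rfl)
  have hb := (key b).mp (Or.inr rfl)
  have hp := (key p).mpr (Or.inl rfl)
  have hq := (key q).mpr (Or.inr rfl)
  rcases ha with ha | ha <;> rcases hb with hb | hb
  · exact absurd (ha.trans hb.symm) hab
  · exact Or.inl ⟨ha, hb⟩
  · exact Or.inr ⟨ha, hb⟩
  · exact absurd (ha.trans hb.symm) hab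

lemma exists_flipf {x w : ι → ZMod 2} (h : hammingDist w x = 2) :
    ∃ p q, p ≠ q ∧ w = flipf x p q := by
  have h2 : (univ.filter fun r => w r ≠ x r).card = 2 := h
  obtain ⟨p, q, hpq, hset⟩ := Finset.card_eq_two.mp h2
  refine ⟨p, q, hpq, ?_⟩
  funext r
  have hmem : ∀ r, w r ≠ x r ↔ r = p ∨ r = q := by
    intro r
    constructor
    · intro hr
      have : r ∈ univ.filter fun r => w r ≠ x r := by simp [hr]
      rw [hset] at this; simpa using this
    · intro hr
      have : r ∈ ({p, q} : Finset ι) := by simpa using hr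
      rw [← hset] at this
      exact (Finset.mem_filter.mp this).2
  by_cases hr : r = p ∨ r = q
  · have hne := (hmem r).mpr hr
    have : w r = x r + 1 := by
      revert hne; generalize w r = a; generalize x r = b; revert a b; decide
    rcases hr with h1 | h1 <;> subst h1 <;>
      simp [flipf, this, hpq, Ne.symm hpq, add_assoc]
  · push_neg at hr
    have hwr : w r = x r := not_not.mp (fun hh => by
      rcases (hmem r).mp hh with h1 | h1 <;> [exact hr.1 h1; exact hr.2 h1])
    simp [flipf, hwr, hr.1, hr.2]


lemma flipV_comm (v : Vtx ι) (p q : ι) : flipV v q p = flipV v p q := by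
  apply Subtype.ext
  funext r
  simp only [flipV, flipf]
  ring

lemma doubleCount (v : Vtx ι) (P : Vtx ι → Prop) [DecidablePred P] :
    (univ.filter fun pq : ι × ι => pq.1 ≠ pq.2 ∧ P (flipV v pq.1 pq.2)).card
    = 2 * (univ.filter fun w : Vtx ι => (halvedCube ι).Adj v w ∧ P w).card := by
  classical
  set T := univ.filter fun pq : ι × ι => pq.1 ≠ pq.2 ∧ P (flipV v pq.1 pq.2) with hT
  set N := univ.filter fun w : Vtx ι => (halvedCube ι).Adj v w ∧ P w with hN
  have hmap : ∀ pq ∈ T, flipV v pq.1 pq.2 ∈ N := by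
    intro pq hpq
    rw [hT, Finset.mem_filter] at hpq
    obtain ⟨-, hne, hP⟩ := hpq
    rw [hN, Finset.mem_filter]
    refine ⟨Finset.mem_univ _, ?_, hP⟩
    show hammingDist v.1 (flipV v pq.1 pq.2).1 = 2
    rw [hammingDist_comm]
    exact flipf_dist v.1 hne
  rw [Finset.card_eq_sum_card_fiberwise hmap]
  have hfib : ∀ w ∈ N, (T.filter fun pq => flipV v pq.1 pq.2 = w).card = 2 := by
    intro w hw
    rw [hN, Finset.mem_filter] at hw
    obtain ⟨-, hadj, hP⟩ := hw
    have hd : hammingDist w.1 v.1 = 2 := by rw [hammingDist_comm]; exact hadj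
    obtain ⟨p, q, hpq, hflip⟩ := exists_flipf hd
    have hwf : w = flipV v p q := Subtype.ext hflip
    have hset : T.filter (fun pq => flipV v pq.1 pq.2 = w) = {(p, q), (q, p)} := by
      ext ⟨a, b⟩
      simp only [Finset.mem_filter, hT, Finset.mem_univ, true_and, Finset.mem_insert,
        Finset.mem_singleton, Prod.mk.injEq]
      constructor
      · rintro ⟨⟨hab, -⟩, heq⟩
        have heq' : flipf v.1 a b = flipf v.1 p q := by
          rw [hwf] at heq; exact congrArg Subtype.val heq
        exact flipf_eq_iff hpq hab heq'
      · rintro (⟨ha, hb⟩ | ⟨ha, hb⟩) <;> subst ha <;> subst hb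
        · exact ⟨⟨hpq, hwf ▸ hP⟩, hwf.symm⟩
        · exact ⟨⟨hpq.symm, by rw [flipV_comm]; exact hwf ▸ hP⟩,
            by rw [flipV_comm]; exact hwf.symm⟩
    rw [hset, Finset.card_insert_of_notMem (by simp [hpq]), Finset.card_singleton]
  rw [Finset.sum_congr rfl hfib, Finset.sum_const, smul_eq_mul, mul_comm]

end helpers

/-- the `×t` construction for the halved cube. If `C` is an
equitable `k`-partition of the halved `n`-cube with quotient matrix `S`, then
`C^{(t)}(x̄₁,…,x̄_t) = C(x̄₁ + ⋯ + x̄_t)` is an equitable `k`-partition of the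
halved `tn`-cube with quotient matrix `S^{(t)} = t²·S + n·(t(t-1)/2)·Id`. -/
theorem stmt12 (n k t : ℕ)
    (C : {x : Fin n → ZMod 2 // Even (hammingDist x 0)} → Fin k)
    (S : Fin k → Fin k → ℕ)
    (hC : IsEquitableK (halvedCube (Fin n)) C S)
    (D : {x : Fin t × Fin n → ZMod 2 // Even (hammingDist x 0)} → Fin k)
    (hD : ∀ v, ∃ h : Even (hammingDist (fun j => ∑ i : Fin t, v.1 (i, j)) 0),
      D v = C ⟨fun j => ∑ i : Fin t, v.1 (i, j), h⟩) :
    IsEquitableK (halvedCube (Fin t × Fin n)) D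
      (fun i j => t ^ 2 * S i j + if i = j then n * (t * (t - 1) / 2) else 0) := by
  classical
  intro v j
  obtain ⟨hsv, hDv⟩ := hD v
  set sv : Vtx (Fin n) := ⟨fun c => ∑ i : Fin t, v.1 (i, c), hsv⟩ with hsvdef
  have indsum : ∀ (c : Fin n) (p : Fin t × Fin n),
      (∑ i : Fin t, if (i, c) = p then (1 : ZMod 2) else 0) = if c = p.2 then 1 else 0 := by
    rintro c ⟨pi, pc⟩
    by_cases h : c = pc
    · subst h
      simp [Prod.ext_iff, Finset.sum_ite_eq']
    · simp [Prod.ext_iff, h]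
  have key : ∀ p q : Fin t × Fin n,
      D (flipV v p q) = C (flipV sv p.2 q.2) := by
    intro p q
    obtain ⟨h', hw⟩ := hD (flipV v p q)
    rw [hw]
    congr 1
    apply Subtype.ext
    funext c
    show (∑ i : Fin t, flipf v.1 p q (i, c)) = flipf sv.1 p.2 q.2 c
    simp only [flipf, Finset.sum_add_distrib, indsum]
    rfl
  have hTeq : (univ.filter fun pq : (Fin t × Fin n) × (Fin t × Fin n) =>
      pq.1 ≠ pq.2 ∧ D (flipV v pq.1 pq.2) = j)
      = univ.filter fun pq => pq.1 ≠ pq.2 ∧ C (flipV sv pq.1.2 pq.2.2) = j := by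
    apply Finset.filter_congr
    intro pq _
    rw [key pq.1 pq.2]
  have hTN := doubleCount v (fun w => D w = j)
  rw [hTeq] at hTN
  have hsplit := Finset.card_filter_add_card_filter_not
    (s := univ.filter fun pq : (Fin t × Fin n) × (Fin t × Fin n) =>
      pq.1 ≠ pq.2 ∧ C (flipV sv pq.1.2 pq.2.2) = j)
    (p := fun pq => pq.1.2 = pq.2.2)
  beta_reduce at hsplit
  have hsame : ((univ.filter fun pq : (Fin t × Fin n) × (Fin t × Fin n) =>
      pq.1 ≠ pq.2 ∧ C (flipV sv pq.1.2 pq.2.2) = j).filter fun pq => pq.1.2 = pq.2.2).card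
      = if C sv = j then n * (t * t - t) else 0 := by
    by_cases hj : C sv = j
    · rw [if_pos hj]
      have heq : ((univ.filter fun pq : (Fin t × Fin n) × (Fin t × Fin n) =>
          pq.1 ≠ pq.2 ∧ C (flipV sv pq.1.2 pq.2.2) = j).filter fun pq => pq.1.2 = pq.2.2)
          = univ.filter fun pq : (Fin t × Fin n) × (Fin t × Fin n) =>
              pq.1 ≠ pq.2 ∧ pq.1.2 = pq.2.2 := by
        rw [Finset.filter_filter]
        apply Finset.filter_congr
        intro pq _
        constructor
        · rintro ⟨⟨h1, -⟩, h2⟩; exact ⟨h1, h2⟩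
        · rintro ⟨h1, h2⟩
          refine ⟨⟨h1, ?_⟩, h2⟩
          rw [h2, flipV_self]; exact hj
      rw [heq]
      rw [Finset.card_nbij' (fun pq => ((pq.1.1, pq.2.1), pq.1.2))
        (fun x => ((x.1.1, x.2), (x.1.2, x.2)))
        (t := (univ : Finset (Fin t)).offDiag ×ˢ (univ : Finset (Fin n)))
        ?_ ?_ ?_ ?_]
      · rw [Finset.card_product, Finset.offDiag_card]
        simp [Finset.card_univ, mul_comm]
      · rintro ⟨⟨i1, c1⟩, ⟨i2, c2⟩⟩ h
        simp only [Finset.mem_coe, Finset.mem_filter, Finset.mem_univ, true_and] at h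
        obtain ⟨h1, h2⟩ := h
        simp only [Finset.mem_coe, Finset.mem_product, Finset.mem_offDiag, Finset.mem_univ, true_and, and_true]
        intro hii
        apply h1
        try simp only at h2
        subst h2; subst hii; rfl
      · rintro ⟨⟨i1, i2⟩, c⟩ h
        simp only [Finset.mem_coe, Finset.mem_product, Finset.mem_offDiag] at h
        simp only [Finset.mem_coe, Finset.mem_filter, Finset.mem_univ, true_and]
        exact ⟨fun hh => h.1.2.2 (congrArg Prod.fst hh), trivial⟩
      · rintro ⟨⟨i1, c1⟩, ⟨i2, c2⟩⟩ h
        simp only [Finset.mem_coe, Finset.mem_filter, Finset.mem_univ, true_and] at h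
        simp only at h ⊢
        rw [Prod.ext_iff, Prod.ext_iff, Prod.ext_iff]
        exact ⟨⟨rfl, rfl⟩, rfl, h.2⟩
      · rintro ⟨⟨i1, i2⟩, c⟩ h
        rfl
    · rw [if_neg hj]
      rw [Finset.card_eq_zero, Finset.filter_eq_empty_iff]
      rintro pq hpq h2
      rw [Finset.mem_filter] at hpq
      obtain ⟨-, -, hc⟩ := hpq
      rw [h2, flipV_self] at hc
      exact hj hc
  have hdiff : ((univ.filter fun pq : (Fin t × Fin n) × (Fin t × Fin n) =>
      pq.1 ≠ pq.2 ∧ C (flipV sv pq.1.2 pq.2.2) = j).filter fun pq => ¬ pq.1.2 = pq.2.2).card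
      = (univ.filter fun cc : Fin n × Fin n =>
          cc.1 ≠ cc.2 ∧ C (flipV sv cc.1 cc.2) = j).card * (t * t) := by
    have heq : ((univ.filter fun pq : (Fin t × Fin n) × (Fin t × Fin n) =>
        pq.1 ≠ pq.2 ∧ C (flipV sv pq.1.2 pq.2.2) = j).filter fun pq => ¬ pq.1.2 = pq.2.2)
        = univ.filter fun pq : (Fin t × Fin n) × (Fin t × Fin n) =>
            pq.1.2 ≠ pq.2.2 ∧ C (flipV sv pq.1.2 pq.2.2) = j := by
      rw [Finset.filter_filter]
      apply Finset.filter_congr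
      intro pq _
      constructor
      · rintro ⟨⟨-, h2⟩, h3⟩; exact ⟨h3, h2⟩
      · rintro ⟨h1, h2⟩
        exact ⟨⟨fun hh => h1 (congrArg Prod.snd hh), h2⟩, h1⟩
    rw [heq]
    rw [Finset.card_nbij' (fun pq => ((pq.1.2, pq.2.2), (pq.1.1, pq.2.1)))
      (fun x => ((x.2.1, x.1.1), (x.2.2, x.1.2)))
      (t := (univ.filter fun cc : Fin n × Fin n =>
          cc.1 ≠ cc.2 ∧ C (flipV sv cc.1 cc.2) = j) ×ˢ (univ : Finset (Fin t × Fin t)))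
      ?_ ?_ ?_ ?_]
    · rw [Finset.card_product, Finset.card_univ]
      simp [mul_comm]
    · rintro ⟨⟨i1, c1⟩, ⟨i2, c2⟩⟩ h
      simp only [Finset.mem_coe, Finset.mem_filter, Finset.mem_univ, true_and] at h
      simp only [Finset.mem_coe, Finset.mem_product, Finset.mem_univ, and_true,
        Finset.mem_filter, true_and]
      exact h
    · rintro ⟨⟨c1, c2⟩, ⟨i1, i2⟩⟩ h
      simp only [Finset.mem_coe, Finset.mem_product, Finset.mem_univ, and_true,
        Finset.mem_filter, true_and] at h
      simp only [Finset.mem_coe, Finset.mem_filter, Finset.mem_univ, true_and]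
      exact h
    · rintro ⟨⟨i1, c1⟩, ⟨i2, c2⟩⟩ h
      rfl
    · rintro ⟨⟨c1, c2⟩, ⟨i1, i2⟩⟩ h
      rfl
  have hU : (univ.filter fun cc : Fin n × Fin n =>
      cc.1 ≠ cc.2 ∧ C (flipV sv cc.1 cc.2) = j).card = 2 * S (C sv) j := by
    rw [doubleCount sv (fun u => C u = j)]
    rw [hC sv j]
  rw [hsame, hdiff, hU, hTN] at hsplit
  rw [hDv]
  show (univ.filter fun w : Vtx (Fin t × Fin n) =>
      (halvedCube (Fin t × Fin n)).Adj v w ∧ D w = j).card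
      = t ^ 2 * S (C sv) j + if C sv = j then n * (t * (t - 1) / 2) else 0
  have hdvd : 2 ∣ t * (t - 1) := by
    rcases t with _ | s
    · simp
    · rw [Nat.succ_sub_one]
      exact even_iff_two_dvd.mp (by
        have := Nat.even_mul_succ_self s
        rwa [mul_comm] at this)
  have htt : t * t - t = t * (t - 1) := by
    rcases t with _ | s
    · simp
    · have h1 : (s + 1) * (s + 1) = (s + 1) * s + (s + 1) := by ring
      rw [Nat.succ_sub_one, h1, Nat.add_sub_cancel]
  obtain ⟨m, hm⟩ := hdvd
  have hm2 : t * (t - 1) / 2 = m := by omega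
  rw [htt, hm] at hsplit
  rw [hm2]
  have hpow : t ^ 2 * S (C sv) j = t * t * S (C sv) j := by rw [sq]
  rw [hpow]
  have h2 : 2 * S (C sv) j * (t * t) = 2 * (t * t * S (C sv) j) := by ring
  rw [h2] at hsplit
  by_cases hj : C sv = j
  · rw [if_pos hj] at hsplit ⊢
    have hnm : n * (2 * m) = 2 * (n * m) := by ring
    rw [hnm] at hsplit
    omega
  · rw [if_neg hj] at hsplit ⊢
    omega
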